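/- Let $a > -1$ and $\alpha \in (0,1]$ be constants, and let $f \in C^{0,\alpha}(\bar G_r)$ satisfy $f(y',0) = 0$. Define $F(y',t) = t^{-(a+1)} \int_0^t s^a f(y',s)\, ds$ for $(y',t) \in G_r$. Then $F \in C^{0,\alpha}(\bar G_r)$ (after extending $F$ continuously by $0$ to $t=0$). -/

import Mathlib

open Set Metric

def Gset (m : ℕ) (r : ℝ) : Set (EuclideanSpace ℝ (Fin m) × ℝ) :=
  (Metric.ball (0 : EuclideanSpace ℝ (Fin m)) r) ×ˢ (Set.Ioo (0 : ℝ) r)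

private lemma holder_dist_le' {X Y : Type*} [PseudoMetricSpace X] [PseudoMetricSpace Y]
    {C β : NNReal} {f : X → Y} {s : Set X} (h : HolderOnWith C β f s)
    {x y : X} (hx : x ∈ s) (hy : y ∈ s) :
    dist (f x) (f y) ≤ (C : ℝ) * dist x y ^ (β : ℝ) := by
  have H := h.edist_le hx hy
  rw [edist_dist, edist_dist, ENNReal.ofReal_rpow_of_nonneg dist_nonneg β.coe_nonneg,
    ← ENNReal.ofReal_coe_nnreal, ← ENNReal.ofReal_mul C.coe_nonneg] at H
  exact (ENNReal.ofReal_le_ofReal_iff (by positivity)).mp H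

private lemma holderOnWith_of_dist_le' {X Y : Type*} [PseudoMetricSpace X] [PseudoMetricSpace Y]
    {β : NNReal} {f : X → Y} {s : Set X} {K : ℝ} (hK : 0 ≤ K)
    (h : ∀ x ∈ s, ∀ y ∈ s, dist (f x) (f y) ≤ K * dist x y ^ (β : ℝ)) :
    HolderOnWith K.toNNReal β f s := by
  intro x hx y hy
  rw [edist_dist, edist_dist]
  calc ENNReal.ofReal (dist (f x) (f y)) ≤ ENNReal.ofReal (K * dist x y ^ (β : ℝ)) :=
        ENNReal.ofReal_le_ofReal (h x hx y hy)
    _ = ENNReal.ofReal K * ENNReal.ofReal (dist x y ^ (β : ℝ)) := ENNReal.ofReal_mul hK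
    _ = (K.toNNReal : ENNReal) * ENNReal.ofReal (dist x y) ^ (β : ℝ) := by
        rw [ENNReal.ofReal_rpow_of_nonneg dist_nonneg β.coe_nonneg]
        rfl

/-- Lemma A.2 (case `a > -1`): if `f` is `α`-Hölder on `closure G_r` and vanishes
at `t = 0`, then `F(y',t) = t^{-(a+1)} ∫_0^t s^a f(y',s) ds` is `α`-Hölder on
`closure G_r` (the formula extends by `0` at `t = 0`). -/
theorem stmt_1 {m : ℕ} {r a α : ℝ} (hr : 0 < r) (ha : -1 < a)
    (hα : α ∈ Set.Ioc (0 : ℝ) 1)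
    {f : EuclideanSpace ℝ (Fin m) × ℝ → ℝ} {Cf : NNReal}
    (hf : HolderOnWith Cf ⟨α, le_of_lt hα.1⟩ f (closure (Gset m r)))
    (hzero : ∀ y' ∈ closure (Metric.ball (0 : EuclideanSpace ℝ (Fin m)) r), f (y', 0) = 0) :
    ∃ C : NNReal, HolderOnWith C ⟨α, le_of_lt hα.1⟩
      (fun p : EuclideanSpace ℝ (Fin m) × ℝ =>
        p.2 ^ (-(a + 1)) * ∫ s in (0 : ℝ)..p.2, s ^ a * f (p.1, s))
      (closure (Gset m r)) := by
  obtain ⟨hα0, hα1⟩ := hα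
  have ha1 : (0 : ℝ) < a + 1 := by linarith
  have hclos : closure (Gset m r) =
      closure (ball (0 : EuclideanSpace ℝ (Fin m)) r) ×ˢ Icc (0 : ℝ) r := by
    rw [Gset, closure_prod_eq, closure_Ioo hr.ne]
  -- membership of the rescaled points
  have hmem : ∀ p : EuclideanSpace ℝ (Fin m) × ℝ, p ∈ closure (Gset m r) →
      ∀ u ∈ Set.Icc (0 : ℝ) 1, (p.1, p.2 * u) ∈ closure (Gset m r) := by
    intro p hp u hu
    rw [hclos, Set.mem_prod] at hp ⊢
    refine ⟨hp.1, mul_nonneg hp.2.1 hu.1,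
      le_trans (mul_le_of_le_one_right hp.2.1 hu.2) hp.2.2⟩
  -- continuity and integrability
  have hβpos : (0 : NNReal) < ⟨α, le_of_lt hα0⟩ := by exact_mod_cast hα0
  have hfc : ContinuousOn f (closure (Gset m r)) := hf.continuousOn hβpos
  have hcf : ∀ p ∈ closure (Gset m r),
      ContinuousOn (fun u : ℝ => f (p.1, p.2 * u)) (Set.uIcc 0 1) := by
    intro p hp
    have h2 : Continuous fun u : ℝ => ((p.1, p.2 * u) :
        EuclideanSpace ℝ (Fin m) × ℝ) := by fun_prop
    apply hfc.comp h2.continuousOn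
    intro u hu
    rw [Set.uIcc_of_le zero_le_one] at hu
    exact hmem p hp u hu
  have hintf : ∀ p ∈ closure (Gset m r),
      IntervalIntegrable (fun u : ℝ => u ^ a * f (p.1, p.2 * u))
        MeasureTheory.volume 0 1 :=
    fun p hp => (intervalIntegral.intervalIntegrable_rpow' ha).mul_continuousOn (hcf p hp)
  -- the key Hölder estimate for the rescaled integral
  have key : ∀ p ∈ closure (Gset m r), ∀ q ∈ closure (Gset m r),
      |(∫ u in (0:ℝ)..1, u ^ a * f (p.1, p.2 * u)) -
        ∫ u in (0:ℝ)..1, u ^ a * f (q.1, q.2 * u)|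
        ≤ ((Cf : ℝ) / (a + 1)) * dist p q ^ α := by
    intro p hp q hq
    rw [← intervalIntegral.integral_sub (hintf p hp) (hintf q hq)]
    have hb : ∀ u ∈ Set.Ioc (0:ℝ) 1,
        ‖u ^ a * f (p.1, p.2 * u) - u ^ a * f (q.1, q.2 * u)‖
          ≤ u ^ a * ((Cf : ℝ) * dist p q ^ α) := by
      intro u hu
      have hua : (0 : ℝ) ≤ u ^ a := Real.rpow_nonneg hu.1.le a
      have hd : dist ((p.1, p.2 * u) : EuclideanSpace ℝ (Fin m) × ℝ)
          (q.1, q.2 * u) ≤ dist p q := by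
        rw [Prod.dist_eq, Prod.dist_eq]
        refine max_le_max le_rfl ?_
        rw [Real.dist_eq, Real.dist_eq, ← sub_mul, abs_mul, abs_of_nonneg hu.1.le]
        exact mul_le_of_le_one_right (abs_nonneg _) hu.2
      have hfd : dist (f (p.1, p.2 * u)) (f (q.1, q.2 * u))
          ≤ (Cf : ℝ) * dist p q ^ α := by
        refine (holder_dist_le' hf (hmem p hp u ⟨hu.1.le, hu.2⟩)
          (hmem q hq u ⟨hu.1.le, hu.2⟩)).trans ?_
        have : dist ((p.1, p.2 * u) : EuclideanSpace ℝ (Fin m) × ℝ)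
            (q.1, q.2 * u) ^ α ≤ dist p q ^ α :=
          Real.rpow_le_rpow dist_nonneg hd hα0.le
        exact mul_le_mul_of_nonneg_left this Cf.coe_nonneg
      rw [← mul_sub, norm_mul, Real.norm_eq_abs, Real.norm_eq_abs, abs_of_nonneg hua]
      refine mul_le_mul_of_nonneg_left ?_ hua
      rw [← Real.dist_eq]
      exact hfd
    have hbint : IntervalIntegrable (fun u : ℝ => u ^ a * ((Cf : ℝ) * dist p q ^ α))
        MeasureTheory.volume 0 1 :=
      (intervalIntegral.intervalIntegrable_rpow' ha).mul_const _
    have hmain := intervalIntegral.norm_integral_le_abs_of_norm_le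
      (μ := MeasureTheory.volume) (a := (0:ℝ)) (b := 1)
      (f := fun u : ℝ => u ^ a * f (p.1, p.2 * u) - u ^ a * f (q.1, q.2 * u))
      ((MeasureTheory.ae_restrict_iff' measurableSet_uIoc).mpr
        (Filter.Eventually.of_forall (by
          intro u hu
          rw [Set.uIoc_of_le zero_le_one] at hu
          exact hb u hu)))
      hbint
    rw [Real.norm_eq_abs] at hmain
    refine hmain.trans ?_
    have hval : (∫ u in (0:ℝ)..1, u ^ a * ((Cf : ℝ) * dist p q ^ α))
        = ((Cf : ℝ) * dist p q ^ α) / (a + 1) := by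
      rw [intervalIntegral.integral_mul_const, integral_rpow (Or.inl ha),
        Real.one_rpow, Real.zero_rpow ha1.ne']
      ring
    rw [hval, abs_of_nonneg (by positivity)]
    exact le_of_eq (by ring)
  -- change of variables: the two formulas agree on the closure
  have heq : ∀ p : EuclideanSpace ℝ (Fin m) × ℝ, p ∈ closure (Gset m r) →
      p.2 ^ (-(a + 1)) * (∫ s in (0:ℝ)..p.2, s ^ a * f (p.1, s))
        = ∫ u in (0:ℝ)..1, u ^ a * f (p.1, p.2 * u) := by
    intro p hp
    have hp' := hp
    rw [hclos, Set.mem_prod] at hp'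
    rcases eq_or_lt_of_le hp'.2.1 with h0 | h0
    · rw [← h0]
      simp only [intervalIntegral.integral_same, mul_zero, zero_mul]
      rw [hzero p.1 hp'.1]
      simp
    · set t := p.2 with htdef
      have ht : t ≠ 0 := h0.ne'
      have hstep : ∀ u ∈ Set.uIcc (0:ℝ) 1,
          u ^ a * f (p.1, t * u)
            = t ^ (-a) * ((u * t) ^ a * f (p.1, u * t)) := by
        intro u hu
        rw [Set.uIcc_of_le zero_le_one] at hu
        rw [mul_comm u t, Real.mul_rpow h0.le hu.1, ← mul_assoc, ← mul_assoc,
          ← Real.rpow_add h0]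
        simp
      calc t ^ (-(a + 1)) * (∫ s in (0:ℝ)..t, s ^ a * f (p.1, s))
          = t ^ (-a) * (t⁻¹ • ∫ s in (0:ℝ)..t, s ^ a * f (p.1, s)) := by
            rw [smul_eq_mul, ← mul_assoc]
            congr 1
            rw [show -(a+1) = -a + (-1) by ring, Real.rpow_add h0,
              Real.rpow_neg_one]
        _ = t ^ (-a) * ∫ u in (0:ℝ)..1, (fun s => s ^ a * f (p.1, s)) (u * t) := by
            rw [intervalIntegral.integral_comp_mul_right
              (fun s => s ^ a * f (p.1, s)) ht, zero_mul, one_mul]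
        _ = ∫ u in (0:ℝ)..1, t ^ (-a) * ((u * t) ^ a * f (p.1, u * t)) := by
            rw [← intervalIntegral.integral_const_mul]
        _ = ∫ u in (0:ℝ)..1, u ^ a * f (p.1, t * u) :=
            (intervalIntegral.integral_congr hstep).symm
  -- conclude
  refine ⟨((Cf : ℝ) / (a + 1)).toNNReal, ?_⟩
  refine holderOnWith_of_dist_le' (by positivity) ?_
  intro x hx y hy
  simp only [heq x hx, heq y hy, Real.dist_eq]
  exact key x hx y hy
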